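/- Assume μ_0 > 0 and Σ_{j=0}^∞ 1/(λ_j π_j) = ∞. Then for every n≥0 the series Σ_{j=n}^∞ 1/(a_j P_j(0) P_{j+1}(0)) converges and −( Σ_{j=n}^∞ 1/(a_j P_j(0) P_{j+1}(0)) ) · P_n(0) = (−1)^n √π_n / μ_0. -/

import Mathlib

open Finset Filter

/-- Lemma 3.2, divergent case: assuming `μ_0 > 0` and `Σ_j 1/(λ_j π_j) = ∞`,
for every `n ≥ 0` the tail series `Σ_{j=n}^∞ 1/(a_j P_j(0) P_{j+1}(0))` converges and
`−(Σ_{j=n}^∞ 1/(a_j P_j(0) P_{j+1}(0))) · P_n(0) = (−1)^n √π_n / μ_0`. -/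
theorem birth_death_tail_series_divergent_case
    (lam mu : ℕ → ℝ)
    (hlam : ∀ n, 0 < lam n)
    (hmu : ∀ n, 1 ≤ n → 0 < mu n)
    (hmu0 : 0 < mu 0)
    (pi a s P : ℕ → ℝ)
    (hpi : ∀ n, pi n = ∏ k ∈ Finset.range n, lam k / mu (k + 1))
    (ha : ∀ n, a n = Real.sqrt (lam n * mu (n + 1)))
    (hs : ∀ n, s n = mu 0 * ∑ k ∈ Finset.range n, 1 / (lam k * pi k))
    (hP : ∀ n, P n = (-1) ^ n * Real.sqrt (pi n) * (1 + s n))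
    (hdiv : Tendsto (fun n : ℕ => ∑ k ∈ Finset.range n, 1 / (lam k * pi k)) atTop atTop) :
    ∀ n : ℕ,
      Summable (fun j : ℕ => 1 / (a (n + j) * P (n + j) * P (n + j + 1))) ∧
      -(∑' j : ℕ, 1 / (a (n + j) * P (n + j) * P (n + j + 1))) * P n
        = (-1) ^ n * Real.sqrt (pi n) / mu 0 := by
  -- positivity of pi
  have hpipos : ∀ m, 0 < pi m := by
    intro m
    rw [hpi]
    exact Finset.prod_pos fun k _ => div_pos (hlam k) (hmu (k + 1) (Nat.succ_le_succ (Nat.zero_le k)))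
  have hmupos : ∀ m, 0 < mu (m + 1) := fun m => hmu (m + 1) (Nat.succ_le_succ (Nat.zero_le m))
  -- s is nonnegative and its increments
  have hsstep : ∀ m, s (m + 1) = s m + mu 0 / (lam m * pi m) := by
    intro m
    rw [hs, hs, Finset.sum_range_succ, mul_add]
    ring
  have hsnonneg : ∀ m, 0 ≤ s m := by
    intro m
    rw [hs]
    apply mul_nonneg hmu0.le
    apply Finset.sum_nonneg
    intro k _
    exact (one_div_pos.mpr (mul_pos (hlam k) (hpipos k))).le
  have hspos : ∀ m, (0:ℝ) < 1 + s m := fun m => by linarith [hsnonneg m]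
  have hsmono : ∀ m, s m ≤ s (m + 1) := by
    intro m
    rw [hsstep]
    have : 0 < mu 0 / (lam m * pi m) := div_pos hmu0 (mul_pos (hlam m) (hpipos m))
    linarith
  -- pi recursion
  have hpistep : ∀ m, pi (m + 1) = pi m * (lam m / mu (m + 1)) := by
    intro m
    rw [hpi, hpi, Finset.prod_range_succ]
  -- key sqrt algebra
  have h1 : ∀ m, a m * Real.sqrt (pi m) * Real.sqrt (pi (m + 1)) = lam m * pi m := by
    intro m
    rw [ha]
    have hx : (0:ℝ) ≤ lam m * mu (m + 1) := (mul_pos (hlam m) (hmupos m)).le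
    have hy : (0:ℝ) ≤ pi m := (hpipos m).le
    rw [← Real.sqrt_mul hx, ← Real.sqrt_mul (mul_nonneg hx hy)]
    have : lam m * mu (m + 1) * pi m * pi (m + 1) = (lam m * pi m) ^ 2 := by
      rw [hpistep m]
      have hmne := (hmupos m).ne'
      field_simp
    rw [this, Real.sqrt_sq (mul_pos (hlam m) (hpipos m)).le]
  -- product formula
  have hprod : ∀ m, a m * P m * P (m + 1)
      = -(lam m * pi m) * ((1 + s m) * (1 + s (m + 1))) := by
    intro m
    rw [hP m, hP (m + 1)]
    have h2 : ((-1:ℝ) ^ m * (-1) ^ (m + 1)) = -1 := by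
      rw [← pow_add, show m + (m + 1) = 2 * m + 1 by ring, pow_succ, pow_mul,
        neg_one_sq, one_pow]
      ring
    calc a m * ((-1) ^ m * Real.sqrt (pi m) * (1 + s m)) *
          ((-1) ^ (m + 1) * Real.sqrt (pi (m + 1)) * (1 + s (m + 1)))
        = ((-1:ℝ) ^ m * (-1) ^ (m + 1)) * (a m * Real.sqrt (pi m) * Real.sqrt (pi (m + 1))) *
          ((1 + s m) * (1 + s (m + 1))) := by ring
      _ = -1 * (lam m * pi m) * ((1 + s m) * (1 + s (m + 1))) := by rw [h2, h1]
      _ = -(lam m * pi m) * ((1 + s m) * (1 + s (m + 1))) := by ring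
  -- term identity
  have hterm : ∀ m, 1 / (a m * P m * P (m + 1))
      = -((1 / mu 0) * (1 / (1 + s m) - 1 / (1 + s (m + 1)))) := by
    intro m
    rw [hprod m]
    have h0 : lam m * pi m ≠ 0 := (mul_pos (hlam m) (hpipos m)).ne'
    have hm0 : mu 0 ≠ 0 := hmu0.ne'
    have hA : (1 + s m) ≠ 0 := (hspos m).ne'
    have hB : (1 + s (m + 1)) ≠ 0 := (hspos (m + 1)).ne'
    have hBA : ((1 + s (m + 1)) - (1 + s m)) * (lam m * pi m) = mu 0 := by
      rw [hsstep m]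
      rw [show 1 + (s m + mu 0 / (lam m * pi m)) - (1 + s m) = mu 0 / (lam m * pi m) by ring]
      exact div_mul_cancel₀ (mu 0) h0
    field_simp
    rw [neg_inj, ← hBA, mul_div_cancel_right₀ _ h0]
  -- limit of s
  have hstend : Tendsto s atTop atTop := by
    have : Tendsto (fun n : ℕ => mu 0 * ∑ k ∈ Finset.range n, 1 / (lam k * pi k)) atTop atTop :=
      hdiv.const_mul_atTop hmu0
    convert this using 1
    funext n
    exact hs n
  intro n
  -- g and its properties
  set g : ℕ → ℝ := fun j => (1 / mu 0) * (1 / (1 + s (n + j))) with hg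
  have hgnonneg : ∀ j, 0 ≤ g j := by
    intro j
    exact mul_nonneg (one_div_nonneg.mpr hmu0.le) (one_div_nonneg.mpr (hspos (n + j)).le)
  have hterm' : ∀ j, 1 / (a (n + j) * P (n + j) * P (n + j + 1)) = -(g j - g (j + 1)) := by
    intro j
    rw [hterm (n + j)]
    simp only [hg]
    congr 2
    ring_nf
  have hgmono : ∀ j, g (j + 1) ≤ g j := by
    intro j
    apply mul_le_mul_of_nonneg_left _ (one_div_nonneg.mpr hmu0.le)
    apply one_div_le_one_div_of_le (hspos (n + j))
    have := hsmono (n + j)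
    simp only [← Nat.add_assoc]
    linarith
  have hfnonneg : ∀ j, 0 ≤ g j - g (j + 1) := fun j => sub_nonneg.mpr (hgmono j)
  -- partial sums
  have hpartial : ∀ N, ∑ j ∈ Finset.range N, (g j - g (j + 1)) = g 0 - g N :=
    fun N => Finset.sum_range_sub' g N
  have hsummable : Summable (fun j => g j - g (j + 1)) := by
    apply summable_of_sum_range_le (c := g 0) hfnonneg
    intro N
    rw [hpartial]
    have := hgnonneg N
    linarith
  -- g tends to 0
  have hgtend : Tendsto g atTop (nhds 0) := by
    have h1 : Tendsto (fun j => s (n + j)) atTop atTop := by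
      have := hstend.comp (tendsto_add_atTop_nat n)
      convert this using 2 with j
      simp [Function.comp, Nat.add_comm]
    have h2 : Tendsto (fun j => 1 + s (n + j)) atTop atTop :=
      tendsto_atTop_add_const_left _ 1 h1
    have h3 : Tendsto (fun j => (1 + s (n + j))⁻¹) atTop (nhds 0) :=
      h2.inv_tendsto_atTop
    have := h3.const_mul (1 / mu 0)
    rw [mul_zero] at this
    convert this using 2 with j
    simp [hg, one_div]
  -- value of the telescoping sum
  have hhassum : HasSum (fun j => g j - g (j + 1)) (g 0) := by
    rw [hsummable.hasSum_iff_tendsto_nat]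
    have : Tendsto (fun N => g 0 - g N) atTop (nhds (g 0 - 0)) :=
      tendsto_const_nhds.sub hgtend
    rw [sub_zero] at this
    convert this using 2 with N
    exact hpartial N
  have hsummable' : Summable (fun j : ℕ => 1 / (a (n + j) * P (n + j) * P (n + j + 1))) := by
    have := hsummable.neg
    apply this.congr
    intro j
    rw [hterm' j]
  constructor
  · exact hsummable'
  · have htsum : (∑' j : ℕ, 1 / (a (n + j) * P (n + j) * P (n + j + 1))) = -(g 0) := by
      have : HasSum (fun j : ℕ => 1 / (a (n + j) * P (n + j) * P (n + j + 1))) (-(g 0)) := by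
        have := hhassum.neg
        apply this.congr_fun
        intro j
        rw [hterm' j]
      exact this.tsum_eq
    rw [htsum, neg_neg, hP n]
    simp only [hg]
    have hA : (1 + s (n + 0)) ≠ 0 := (hspos (n + 0)).ne'
    have hm0 : mu 0 ≠ 0 := hmu0.ne'
    rw [Nat.add_zero] at *
    field_simp
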